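/- arXiv:2405.07947 — 2 statements merged into one kernel-verified Lean document; each statement's English description precedes it below -/
import Mathlib

section
/- Let F be a Ferrers diagram whose first row has length k and second row has length ℓ ≥ 1. If (ℓ, k−ℓ+1) ∉ F, then the divisor D_{k+1,1} on R(F) (the sum of all vertices not in the first row) does not have positive rank. -/
open Finset

open scoped Classical

/-- A divisor is effective if it is nonnegative everywhere. -/
def Effective {V : Type*} (D : V → ℤ) : Prop := ∀ v, 0 ≤ D v

/-- The degree of a divisor: the total number of chips. -/
def degD {V : Type*} [Fintype V] (D : V → ℤ) : ℤ := ∑ v, D v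

/-- The effect on a vertex `w` of firing each vertex `u` with multiplicity `f u`. -/
noncomputable def lap {V : Type*} [Fintype V] (G : SimpleGraph V) (f : V → ℤ) (w : V) : ℤ :=
  (∑ u, f u * (if G.Adj u w then 1 else 0)) - f w * (∑ u, if G.Adj u w then (1 : ℤ) else 0)

/-- Two divisors are (chip-firing) equivalent if one is obtained from the other by a
sequence of chip-firing moves, i.e. they differ by a Laplacian of some `f : V → ℤ`. -/
def LinEquiv {V : Type*} [Fintype V] (G : SimpleGraph V) (D D' : V → ℤ) : Prop :=
  ∃ f : V → ℤ, ∀ w, D' w = D w + lap G f w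

/-- A divisor has positive rank if for every vertex there is an equivalent effective
divisor with a chip at that vertex. -/
def PositiveRank {V : Type*} [Fintype V] (G : SimpleGraph V) (D : V → ℤ) : Prop :=
  ∀ v, ∃ D', LinEquiv G D D' ∧ Effective D' ∧ 0 < D' v

/-- A Ferrers diagram: a finite subset of ℕ² with coordinates ≥ 1, closed under
decreasing either coordinate toward 1. -/
def IsFerrers (F : Finset (ℕ × ℕ)) : Prop :=
  ∀ p ∈ F, 1 ≤ p.1 ∧ 1 ≤ p.2 ∧ (p.1 = 1 ∨ (p.1 - 1, p.2) ∈ F) ∧ (p.2 = 1 ∨ (p.1, p.2 - 1) ∈ F)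

/-- The Ferrers rook graph: vertices are points of `F`, two distinct points adjacent
iff they share a row or a column. -/
def rookGraph (F : Finset (ℕ × ℕ)) : SimpleGraph {p // p ∈ F} where
  Adj a b := a ≠ b ∧ ((a : ℕ × ℕ).1 = (b : ℕ × ℕ).1 ∨ (a : ℕ × ℕ).2 = (b : ℕ × ℕ).2)
  symm := ⟨fun a b h => ⟨h.1.symm, h.2.imp Eq.symm Eq.symm⟩⟩
  loopless := ⟨fun a h => h.1 rfl⟩

/-- The set of degrees of positive-rank divisors on `R(F)`; its least element is the gonality. -/
def gonSet (F : Finset (ℕ × ℕ)) : Set ℤ :=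
  {d | ∃ D : {p // p ∈ F} → ℤ, PositiveRank (rookGraph F) D ∧ degD D = d}

/-- The divisor `D_{x,y}`: one chip on each vertex not in column `x` and not in row `y`. -/
def Dxy (F : Finset (ℕ × ℕ)) (x y : ℕ) : {p // p ∈ F} → ℤ :=
  fun p => if (p : ℕ × ℕ).1 ≠ x ∧ (p : ℕ × ℕ).2 ≠ y then 1 else 0

section AuxChip

lemma lap_eq {V : Type*} [Fintype V] (G : SimpleGraph V) (f : V → ℤ) (w : V) :
    lap G f w = ∑ u, (if G.Adj u w then f u - f w else 0) := by
  unfold lap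
  rw [Finset.mul_sum, ← Finset.sum_sub_distrib]
  apply Finset.sum_congr rfl
  intro u _
  by_cases h : G.Adj u w <;> simp [h]

lemma lap_sub {V : Type*} [Fintype V] (G : SimpleGraph V) (f g : V → ℤ) (w : V) :
    lap G (f - g) w = lap G f w - lap G g w := by
  rw [lap_eq, lap_eq, lap_eq, ← Finset.sum_sub_distrib]
  apply Finset.sum_congr rfl
  intro u _
  by_cases h : G.Adj u w <;> simp [h]; ring

lemma card_filter_univ (F : Finset (ℕ × ℕ)) (P : ℕ × ℕ → Prop) :
    (Finset.univ.filter (fun u : {p // p ∈ F} => P u.val)).card = (F.filter P).card := by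
  apply Finset.card_bij (fun u _ => u.val)
  · intro a ha; simp only [Finset.mem_filter, Finset.mem_univ, true_and] at ha ⊢
    exact ⟨a.2, ha⟩
  · intro a _ b _ h; exact Subtype.ext h
  · intro b hb; simp only [Finset.mem_filter] at hb; exact ⟨⟨b, hb.1⟩, by simp [hb.2], rfl⟩

lemma no_chip_at {V : Type*} [Fintype V] (G : SimpleGraph V) (q : V) (D1 : V → ℤ) (r : V → ℕ)
    (hD1q : D1 q = 0)
    (hcert : ∀ v : V, v ≠ q →
      D1 v < ((Finset.univ.filter (fun u => G.Adj u v ∧ r u < r v)).card : ℤ))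
    (E : V → ℤ) (hE : LinEquiv G D1 E) (hEeff : Effective E) : ¬ 0 < E q := by
  intro hq
  obtain ⟨f, hf⟩ := hE
  obtain ⟨m, -, hmax⟩ := Finset.exists_max_image Finset.univ f ⟨q, Finset.mem_univ q⟩
  set A : Finset V := Finset.univ.filter (fun v => f v = f m) with hA
  by_cases hqA : q ∈ A
  · have hfq : f q = f m := (Finset.mem_filter.mp hqA).2
    have hlap : lap G f q ≤ 0 := by
      rw [lap_eq]
      apply Finset.sum_nonpos
      intro u _
      by_cases h : G.Adj u q <;> simp [h]
      · rw [hfq]; exact hmax u (Finset.mem_univ u)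
    have := hf q
    omega
  · have hAne : A.Nonempty := ⟨m, Finset.mem_filter.mpr ⟨Finset.mem_univ m, rfl⟩⟩
    obtain ⟨w, hwA, hwmin⟩ := Finset.exists_min_image A r hAne
    have hfw : f w = f m := (Finset.mem_filter.mp hwA).2
    have hwq : w ≠ q := by rintro rfl; exact hqA hwA
    have key : lap G f w ≤ -((Finset.univ.filter (fun u => G.Adj u w ∧ r u < r w)).card : ℤ) := by
      rw [lap_eq]
      have hc : -((Finset.univ.filter (fun u => G.Adj u w ∧ r u < r w)).card : ℤ)
          = ∑ u, (if G.Adj u w ∧ r u < r w then (-1 : ℤ) else 0) := by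
        rw [Finset.sum_ite, Finset.sum_const, Finset.sum_const, smul_zero, add_zero,
          nsmul_eq_mul]
        ring
      rw [hc]
      apply Finset.sum_le_sum
      intro u _
      by_cases h : G.Adj u w
      · by_cases h2 : r u < r w
        · simp only [h, h2, and_self, if_true]
          have huA : u ∉ A := fun hu => absurd (hwmin u hu) (by omega)
          have hne : f u ≠ f m := fun hc2 => huA (Finset.mem_filter.mpr ⟨Finset.mem_univ u, hc2⟩)
          have := hmax u (Finset.mem_univ u)
          omega
        · simp only [h, h2, and_false, if_false, if_true]
          have := hmax u (Finset.mem_univ u)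
          omega
      · simp [h]
    have := hf w
    have := hcert w hwq
    have := hEeff w
    omega

lemma mem_colX {F : Finset (ℕ × ℕ)} (hF : IsFerrers F) :
    ∀ a b x, (a, b) ∈ F → 1 ≤ x → x ≤ a → (x, b) ∈ F := by
  intro a
  induction a with
  | zero => intro b x _ h1 h2; exact absurd (h1.trans h2) (by omega)
  | succ n ih =>
    intro b x h h1 h2
    rcases Nat.lt_or_ge x (n + 1) with hlt | hge
    · rcases (hF _ h).2.2.1 with he | h'
      · simp at he; omega
      · exact ih b x h' h1 (by omega)
    · have hx : x = n + 1 := by omega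
      subst hx; exact h

lemma mem_rowX {F : Finset (ℕ × ℕ)} (hF : IsFerrers F) :
    ∀ a b y, (a, b) ∈ F → 1 ≤ y → y ≤ b → (a, y) ∈ F := by
  intro a b
  induction b with
  | zero => intro y _ h1 h2; exact absurd (h1.trans h2) (by omega)
  | succ n ih =>
    intro y h h1 h2
    rcases Nat.lt_or_ge y (n + 1) with hlt | hge
    · rcases (hF _ h).2.2.2 with he | h'
      · simp at he; omega
      · exact ih y h' h1 (by omega)
    · have hy : y = n + 1 := by omega
      subst hy; exact h

lemma mem_downX {F : Finset (ℕ × ℕ)} (hF : IsFerrers F) {p : ℕ × ℕ} (hp : p ∈ F)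
    {x y : ℕ} (hx1 : 1 ≤ x) (hxa : x ≤ p.1) (hy1 : 1 ≤ y) (hyb : y ≤ p.2) : (x, y) ∈ F := by
  have h1 : (x, p.2) ∈ F := mem_colX hF p.1 p.2 x hp hx1 hxa
  exact mem_rowX hF x p.2 y h1 hy1 hyb

lemma snd_le_cardX {F : Finset (ℕ × ℕ)} (hF : IsFerrers F) {p : ℕ × ℕ} (hp : p ∈ F) :
    p.2 ≤ F.card := by
  have hsub : (Finset.Icc 1 p.2).image (fun t => (p.1, t)) ⊆ F := by
    intro q hq
    simp only [Finset.mem_image, Finset.mem_Icc] at hq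
    obtain ⟨t, ⟨ht1, ht2⟩, rfl⟩ := hq
    exact mem_downX hF hp ((hF p hp).1) le_rfl ht1 ht2
  have := Finset.card_le_card hsub
  rwa [Finset.card_image_of_injective _ (fun a b h => (Prod.mk.injEq _ _ _ _).mp h |>.2),
    Nat.card_Icc, Nat.add_sub_cancel] at this

end AuxChip

theorem stmt4 (F : Finset (ℕ × ℕ)) (hF : IsFerrers F) (k ℓ : ℕ)
    (hk : (k, 1) ∈ F) (hk' : (k + 1, 1) ∉ F)
    (hℓ1 : 1 ≤ ℓ) (hl : (ℓ, 2) ∈ F) (hl' : (ℓ + 1, 2) ∉ F)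
    (hcond : (ℓ, k - ℓ + 1) ∉ F) :
    ¬ PositiveRank (rookGraph F) (Dxy F (k + 1) 1) := by
  intro hPR
  -- basic coordinate bounds
  have hx1 : ∀ p ∈ F, 1 ≤ p.1 := fun p hp => (hF p hp).1
  have hy1 : ∀ p ∈ F, 1 ≤ p.2 := fun p hp => (hF p hp).2.1
  have hx_le_k : ∀ p ∈ F, p.1 ≤ k := by
    intro p hp
    by_contra hgt
    push_neg at hgt
    exact hk' (mem_downX hF hp (by omega) (by omega) le_rfl (hy1 p hp))
  have hy2 : ∀ p ∈ F, 2 ≤ p.2 → p.1 ≤ ℓ := by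
    intro p hp h2
    by_contra hgt
    push_neg at hgt
    exact hl' (mem_downX hF hp (by omega) (by omega) (by omega) h2)
  have hl1 : (ℓ, 1) ∈ F := mem_downX hF hl hℓ1 le_rfl le_rfl (by omega)
  have hℓk : ℓ < k := by
    have h1 : ℓ ≤ k := hx_le_k (ℓ, 1) hl1
    rcases Nat.lt_or_ge ℓ k with h | h
    · exact h
    · have : ℓ = k := le_antisymm h1 h
      subst this
      simp at hcond
      exact absurd hl1 hcond
  -- column heights
  set ht : ℕ → ℕ := fun x => (F.filter fun p => p.1 = x).card with hht
  have hht_mem : ∀ x y, (x, y) ∈ F → 1 ≤ ht x := by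
    intro x y hxy
    exact Finset.card_pos.mpr ⟨(x, y), Finset.mem_filter.mpr ⟨hxy, rfl⟩⟩
  have hht_top : ∀ x, ℓ < x → ht x ≤ 1 := by
    intro x hx
    have hsub : (F.filter fun p => p.1 = x) ⊆ {(x, 1)} := by
      intro p hp
      obtain ⟨hpF, hpx⟩ := Finset.mem_filter.mp hp
      rcases Nat.lt_or_ge p.2 2 with h2 | h2
      · have : p.2 = 1 := by have := hy1 p hpF; omega
        simp [Finset.mem_singleton, ← hpx, ← this]
      · exact absurd (hy2 p hpF h2) (by omega)
    simpa using Finset.card_le_card hsub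
  have hht_ell : ht ℓ ≤ k - ℓ := by
    have hb : ∀ p ∈ (F.filter fun p => p.1 = ℓ), Prod.snd p ∈ Finset.Icc 1 (k - ℓ) := by
      intro p hp
      obtain ⟨hpF, hpx⟩ := Finset.mem_filter.mp hp
      simp only [Finset.mem_Icc]
      refine ⟨hy1 p hpF, ?_⟩
      by_contra hgt
      push_neg at hgt
      exact hcond (mem_downX hF hpF (by omega) (by omega) (by omega) hgt)
    have := Finset.card_le_card_of_injOn Prod.snd hb ?_
    · simpa using this
    · intro p hp p' hp' hsnd
      obtain ⟨-, hpx⟩ := Finset.mem_filter.mp hp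
      obtain ⟨-, hpx'⟩ := Finset.mem_filter.mp hp'
      exact Prod.ext (hpx.trans hpx'.symm) hsnd
  have hhtk : ht k = 1 := le_antisymm (hht_top k hℓk) (hht_mem k 1 hk)
  -- the vertex q and divisor D1
  set q : {p // p ∈ F} := ⟨(k, 1), hk⟩ with hq
  set D1 : {p // p ∈ F} → ℤ :=
    fun p => if (p : ℕ × ℕ).2 = 1 then (ht (p : ℕ × ℕ).1 : ℤ) - 1 else 0 with hD1
  set r : {p // p ∈ F} → ℕ := fun p =>
    if (p : ℕ × ℕ).2 = 1 then
      (if (p : ℕ × ℕ).1 = k then 0 else if ℓ < (p : ℕ × ℕ).1 then 1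
       else if (p : ℕ × ℕ).1 = ℓ then 2 else F.card + 3)
    else (if (p : ℕ × ℕ).1 = ℓ then 3 else (p : ℕ × ℕ).2 + 2) with hr
  have hadj_iff : ∀ u w : {p // p ∈ F}, (rookGraph F).Adj u w ↔
      (u ≠ w ∧ ((u : ℕ × ℕ).1 = (w : ℕ × ℕ).1 ∨ (u : ℕ × ℕ).2 = (w : ℕ × ℕ).2)) := by
    intro u w; rfl
  have step1 : LinEquiv (rookGraph F) (Dxy F (k + 1) 1) D1 := by
    refine ⟨fun p => if (p : ℕ × ℕ).2 = 1 then (0 : ℤ) else 1, fun w => ?_⟩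
    rw [lap_eq]
    by_cases hw : (w : ℕ × ℕ).2 = 1
    · -- row-1 vertex: gains (ht w.1 - 1) chips
      have hpt : ∀ u : {p // p ∈ F}, (if (rookGraph F).Adj u w then
            (if (u : ℕ × ℕ).2 = 1 then (0:ℤ) else 1)
              - (if (w : ℕ × ℕ).2 = 1 then (0:ℤ) else 1) else 0)
          = (if ((u : ℕ × ℕ).1 = (w : ℕ × ℕ).1 ∧ ¬((u : ℕ × ℕ).2 = 1)) then (1:ℤ) else 0) := by
        intro u
        by_cases hu : (u : ℕ × ℕ).2 = 1
        · by_cases hadj : (rookGraph F).Adj u w <;> simp [hadj, hu, hw]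
        · have hadj : (rookGraph F).Adj u w ↔ (u : ℕ × ℕ).1 = (w : ℕ × ℕ).1 := by
            rw [hadj_iff]
            constructor
            · rintro ⟨hne, h | h⟩
              · exact h
              · exact absurd (h.trans hw) hu
            · intro h
              refine ⟨fun he => hu (by rw [he]; exact hw), Or.inl h⟩
          by_cases h1 : (u : ℕ × ℕ).1 = (w : ℕ × ℕ).1 <;> simp [hadj, h1, hu, hw]
      rw [Finset.sum_congr rfl (fun u _ => hpt u), Finset.sum_boole]
      have hcard : (Finset.univ.filter
            (fun x : {p // p ∈ F} => (x : ℕ × ℕ).1 = (w : ℕ × ℕ).1 ∧ ¬((x : ℕ × ℕ).2 = 1))).card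
          = (F.filter (fun p => p.1 = (w : ℕ × ℕ).1 ∧ ¬(p.2 = 1))).card := by
        apply Finset.card_bij (fun u _ => u.val)
        · intro a ha
          simp only [Finset.mem_filter, Finset.mem_univ, true_and] at ha ⊢
          exact ⟨a.2, ha⟩
        · intro a _ b _ h
          exact Subtype.ext h
        · intro b hb
          simp only [Finset.mem_filter] at hb
          exact ⟨⟨b, hb.1⟩, by
            simp only [Finset.mem_filter, Finset.mem_univ, true_and]
            exact hb.2, rfl⟩
      rw [show (Finset.univ.filter
            (fun x : {p // p ∈ F} => (x : ℕ × ℕ).1 = (w : ℕ × ℕ).1 ∧ ¬((x : ℕ × ℕ).2 = 1))).card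
          = (F.filter (fun p => p.1 = (w : ℕ × ℕ).1 ∧ ¬(p.2 = 1))).card from hcard]
      have hone : (F.filter fun p => p.1 = (w : ℕ × ℕ).1 ∧ p.2 = 1) = {((w : ℕ × ℕ).1, 1)} := by
        ext p
        simp only [Finset.mem_filter, Finset.mem_singleton]
        constructor
        · rintro ⟨hpF, h1, h2⟩
          exact Prod.ext h1 h2
        · rintro rfl
          exact ⟨mem_downX hF w.2 (hx1 _ w.2) le_rfl le_rfl (hy1 _ w.2), rfl, rfl⟩
      have hsplit : (F.filter fun p => p.1 = (w : ℕ × ℕ).1 ∧ p.2 = 1).card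
          + (F.filter fun p => p.1 = (w : ℕ × ℕ).1 ∧ ¬(p.2 = 1)).card = ht (w : ℕ × ℕ).1 := by
        rw [hht]
        rw [← Finset.filter_filter, ← Finset.filter_filter]
        exact Finset.card_filter_add_card_filter_not _
      rw [hone, Finset.card_singleton] at hsplit
      have hD : Dxy F (k + 1) 1 w = 0 := by simp [Dxy, hw]
      rw [hD, hD1]
      simp only [if_pos hw]
      push_cast
      omega
    · -- vertex with y ≥ 2: loses its chip
      have hu0mem : ((w : ℕ × ℕ).1, 1) ∈ F :=
        mem_downX hF w.2 (hx1 _ w.2) le_rfl le_rfl (hy1 _ w.2)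
      have hpt : ∀ u : {p // p ∈ F}, (if (rookGraph F).Adj u w then
            (if (u : ℕ × ℕ).2 = 1 then (0:ℤ) else 1)
              - (if (w : ℕ × ℕ).2 = 1 then (0:ℤ) else 1) else 0)
          = (if u = (⟨((w : ℕ × ℕ).1, 1), hu0mem⟩ : {p // p ∈ F}) then (-1:ℤ) else 0) := by
        intro u
        have hiff : ((rookGraph F).Adj u w ∧ (u : ℕ × ℕ).2 = 1)
            ↔ u = (⟨((w : ℕ × ℕ).1, 1), hu0mem⟩ : {p // p ∈ F}) := by
          constructor
          · rintro ⟨hadj, hu⟩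
            rw [hadj_iff] at hadj
            obtain ⟨hne, h | h⟩ := hadj
            · exact Subtype.ext (Prod.ext h hu)
            · exact absurd (h.symm.trans hu) hw
          · rintro rfl
            refine ⟨?_, rfl⟩
            rw [hadj_iff]
            exact ⟨fun he => hw (by rw [← he]), Or.inl rfl⟩
        by_cases hu : (u : ℕ × ℕ).2 = 1
        · by_cases hadj : (rookGraph F).Adj u w
          · rw [if_pos hadj, if_pos (hiff.mp ⟨hadj, hu⟩), if_pos hu, if_neg hw]; norm_num
          · rw [if_neg hadj, if_neg (fun he => hadj ((hiff.mpr he).1))]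
        · have : u ≠ (⟨((w : ℕ × ℕ).1, 1), hu0mem⟩ : {p // p ∈ F}) :=
            fun he => hu (by rw [he])
          rw [if_neg this]
          by_cases hadj : (rookGraph F).Adj u w
          · rw [if_pos hadj, if_neg hu, if_neg hw]; ring
          · rw [if_neg hadj]
      rw [Finset.sum_congr rfl (fun u _ => hpt u)]
      rw [Finset.sum_ite_eq' Finset.univ _ (fun _ => (-1 : ℤ))]
      simp only [Finset.mem_univ, if_true]
      have hD : Dxy F (k + 1) 1 w = 1 := by
        have hle := hx_le_k _ w.2
        rw [Dxy, if_pos ⟨by omega, hw⟩]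
      rw [hD, hD1]
      simp only [if_neg hw]
      omega
  have hFpos : 0 < F.card := Finset.card_pos.mpr ⟨_, hk⟩
  have hre : ∀ (a b : ℕ) (h : (a, b) ∈ F), r ⟨(a, b), h⟩ =
      if b = 1 then (if a = k then 0 else if ℓ < a then 1 else if a = ℓ then 2 else F.card + 3)
      else (if a = ℓ then 3 else b + 2) := fun a b h => rfl
  have hD1e : ∀ (a b : ℕ) (h : (a, b) ∈ F), D1 ⟨(a, b), h⟩ =
      if b = 1 then (ht a : ℤ) - 1 else 0 := fun a b h => rfl
  have step2 : ∀ v : {p // p ∈ F}, v ≠ q →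
      D1 v < ((Finset.univ.filter
        (fun u => (rookGraph F).Adj u v ∧ r u < r v)).card : ℤ) := by
    intro v hvq
    obtain ⟨⟨x, y⟩, hv⟩ := v
    by_cases hy : y = 1
    · subst hy
      have hxk : x ≤ k := hx_le_k _ hv
      have hxne : x ≠ k := by
        intro h
        subst h
        exact hvq (Subtype.ext rfl)
      rw [hD1e]
      rw [if_pos rfl]
      rcases lt_trichotomy x ℓ with hxl | hxeq | hxl
      · -- case 4 : x < ℓ
        have hrv : r ⟨(x, 1), hv⟩ = F.card + 3 := by
          rw [hre]
          split_ifs <;> omega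
        have hcard : (F.filter fun p => p.1 = x).card ≤ (Finset.univ.filter
            (fun u => (rookGraph F).Adj u ⟨(x, 1), hv⟩ ∧ r u < r ⟨(x, 1), hv⟩)).card := by
          apply Finset.card_le_card_of_injOn
            (fun p => if h : p ∈ F ∧ ¬(p.2 = 1) then ⟨p, h.1⟩ else q)
          · intro p hp
            obtain ⟨hpF, hpx⟩ := Finset.mem_filter.mp hp
            simp only [Finset.mem_coe, Finset.mem_filter, Finset.mem_univ, true_and]
            by_cases hp2 : p.2 = 1
            · rw [dif_neg (by tauto)]
              constructor
              · rw [hadj_iff]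
                refine ⟨?_, Or.inr rfl⟩
                intro h
                have := congrArg (fun z : {p // p ∈ F} => (z : ℕ × ℕ).1) h
                simp [hq] at this
                omega
              · have hrq : r q = 0 := by rw [hq, hre]; simp
                omega
            · rw [dif_pos ⟨hpF, hp2⟩]
              constructor
              · rw [hadj_iff]
                refine ⟨?_, Or.inl hpx⟩
                intro h
                have := congrArg (fun z : {p // p ∈ F} => (z : ℕ × ℕ).2) h
                simp at this
                exact hp2 this
              · have hple := snd_le_cardX hF hpF
                have hru : r ⟨p, hpF⟩ < F.card + 3 := by
                  have : r ⟨p, hpF⟩ = r ⟨(p.1, p.2), hpF⟩ := rfl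
                  rw [this, hre]
                  split_ifs <;> omega
                omega
          · intro p hp p' hp' hgg
            simp only [] at hgg
            obtain ⟨hpF, hpx⟩ := Finset.mem_filter.mp hp
            obtain ⟨hpF', hpx'⟩ := Finset.mem_filter.mp hp'
            by_cases hp2 : p.2 = 1 <;> by_cases hp2' : p'.2 = 1
            · exact Prod.ext (hpx.trans hpx'.symm) (hp2.trans hp2'.symm)
            · rw [dif_neg (by tauto), dif_pos ⟨hpF', hp2'⟩] at hgg
              have := congrArg (fun z : {p // p ∈ F} => (z : ℕ × ℕ).1) hgg
              simp [hq] at this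
              omega
            · rw [dif_pos ⟨hpF, hp2⟩, dif_neg (by tauto)] at hgg
              have := congrArg (fun z : {p // p ∈ F} => (z : ℕ × ℕ).1) hgg
              simp [hq] at this
              omega
            · rw [dif_pos ⟨hpF, hp2⟩, dif_pos ⟨hpF', hp2'⟩] at hgg
              exact congrArg Subtype.val hgg
        have hhx : ht x = (F.filter fun p => p.1 = x).card := rfl
        omega
      · -- case 3 : x = ℓ
        have hrv : r ⟨(x, 1), hv⟩ = 2 := by
          rw [hre]
          split_ifs <;> omega
        have hcard : (Finset.Icc 1 (k - ℓ)).card ≤ (Finset.univ.filter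
            (fun u => (rookGraph F).Adj u ⟨(x, 1), hv⟩ ∧ r u < r ⟨(x, 1), hv⟩)).card := by
          have hgm : ∀ t ∈ Finset.Icc 1 (k - ℓ), (ℓ + t, 1) ∈ F := by
            intro t htI
            simp only [Finset.mem_Icc] at htI
            exact mem_colX hF k 1 (ℓ + t) hk (by omega) (by omega)
          apply Finset.card_le_card_of_injOn
            (fun t => if h : (ℓ + t, 1) ∈ F then ⟨(ℓ + t, 1), h⟩ else q)
          · intro t htI
            have hm := hgm t htI
            simp only [Finset.mem_coe, Finset.mem_Icc] at htI
            beta_reduce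
            rw [dif_pos hm]
            simp only [Finset.mem_coe, Finset.mem_filter, Finset.mem_univ, true_and]
            constructor
            · rw [hadj_iff]
              refine ⟨?_, Or.inr rfl⟩
              intro h
              have := congrArg (fun z : {p // p ∈ F} => (z : ℕ × ℕ).1) h
              simp at this
              omega
            · have h1 : r ⟨(ℓ + t, 1), hm⟩ ≤ 1 := by
                rw [hre]
                split_ifs <;> omega
              omega
          · intro t htI t' htI' hgg
            simp only [] at hgg
            rw [dif_pos (hgm t htI), dif_pos (hgm t' htI')] at hgg
            have := congrArg (fun z : {p // p ∈ F} => (z : ℕ × ℕ).1) hgg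
            simp at this
            omega
        rw [Nat.card_Icc] at hcard
        have h1 : ht x ≤ k - ℓ := by rw [hxeq]; exact hht_ell
        omega
      · -- case 2 : ℓ < x < k
        have h1 := hht_top x hxl
        have h2 := hht_mem x 1 hv
        have hmem : q ∈ (Finset.univ.filter
            (fun u => (rookGraph F).Adj u ⟨(x, 1), hv⟩ ∧ r u < r ⟨(x, 1), hv⟩)) := by
          simp only [Finset.mem_filter, Finset.mem_univ, true_and]
          constructor
          · rw [hadj_iff]
            refine ⟨?_, Or.inr rfl⟩
            intro h
            have := congrArg (fun z : {p // p ∈ F} => (z : ℕ × ℕ).1) h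
            simp [hq] at this
            omega
          · have hrq : r q = 0 := by rw [hq, hre]; simp
            have hrv : r ⟨(x, 1), hv⟩ = 1 := by
              rw [hre]
              split_ifs <;> omega
            omega
        have := Finset.card_pos.mpr ⟨q, hmem⟩
        omega
    · -- y ≥ 2
      have hy2' : 2 ≤ y := by
        have := hy1 _ hv
        omega
      have hxl : x ≤ ℓ := hy2 _ hv hy2'
      rw [hD1e, if_neg hy]
      have hx1' : 1 ≤ x := hx1 _ hv
      rcases eq_or_lt_of_le hxl with hxeq | hxl
      · -- case 5 : x = ℓ
        have hmem : (⟨(x, 1), mem_rowX hF x y 1 hv le_rfl (by omega)⟩ : {p // p ∈ F}) ∈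
            (Finset.univ.filter
            (fun u => (rookGraph F).Adj u ⟨(x, y), hv⟩ ∧ r u < r ⟨(x, y), hv⟩)) := by
          simp only [Finset.mem_filter, Finset.mem_univ, true_and]
          constructor
          · rw [hadj_iff]
            refine ⟨?_, Or.inl rfl⟩
            intro h
            have := congrArg (fun z : {p // p ∈ F} => (z : ℕ × ℕ).2) h
            simp at this
            omega
          · have h1 : r ⟨(x, 1), mem_rowX hF x y 1 hv le_rfl (by omega)⟩ = 2 := by
              rw [hre]
              split_ifs <;> omega
            have h2 : r ⟨(x, y), hv⟩ = 3 := by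
              rw [hre]
              split_ifs <;> omega
            omega
        have := Finset.card_pos.mpr ⟨_, hmem⟩
        exact_mod_cast this
      · rcases eq_or_lt_of_le hy2' with h3 | h3
        · -- case 6 : y = 2, x < ℓ
          have hmem : (⟨(ℓ, 2), hl⟩ : {p // p ∈ F}) ∈ (Finset.univ.filter
              (fun u => (rookGraph F).Adj u ⟨(x, y), hv⟩ ∧ r u < r ⟨(x, y), hv⟩)) := by
            simp only [Finset.mem_filter, Finset.mem_univ, true_and]
            constructor
            · rw [hadj_iff]
              refine ⟨?_, Or.inr (by simp; omega)⟩
              intro h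
              have := congrArg (fun z : {p // p ∈ F} => (z : ℕ × ℕ).1) h
              simp at this
              omega
            · have h1 : r ⟨(ℓ, 2), hl⟩ = 3 := by
                rw [hre]
                split_ifs <;> omega
              have h2 : r ⟨(x, y), hv⟩ = y + 2 := by
                rw [hre]
                split_ifs <;> omega
              omega
          have := Finset.card_pos.mpr ⟨_, hmem⟩
          exact_mod_cast this
        · -- case 7 : y ≥ 3, x < ℓ
          have hm : (x, y - 1) ∈ F := mem_rowX hF x y (y - 1) hv (by omega) (by omega)
          have hmem : (⟨(x, y - 1), hm⟩ : {p // p ∈ F}) ∈ (Finset.univ.filter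
              (fun u => (rookGraph F).Adj u ⟨(x, y), hv⟩ ∧ r u < r ⟨(x, y), hv⟩)) := by
            simp only [Finset.mem_filter, Finset.mem_univ, true_and]
            constructor
            · rw [hadj_iff]
              refine ⟨?_, Or.inl rfl⟩
              intro h
              have := congrArg (fun z : {p // p ∈ F} => (z : ℕ × ℕ).2) h
              simp at this
              omega
            · have h1 : r ⟨(x, y - 1), hm⟩ = (y - 1) + 2 := by
                rw [hre]
                split_ifs <;> omega
              have h2 : r ⟨(x, y), hv⟩ = y + 2 := by
                rw [hre]
                split_ifs <;> omega
              omega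
          have := Finset.card_pos.mpr ⟨_, hmem⟩
          exact_mod_cast this
  -- step 3 : conclude
  obtain ⟨E, ⟨f1, hf1⟩, hEeff, hEq⟩ := hPR q
  obtain ⟨f0, hf0⟩ := step1
  have hD1q : D1 q = 0 := by
    simp only [hD1, hq]
    simp [hhtk]
  have hEquiv : LinEquiv (rookGraph F) D1 E := by
    refine ⟨f1 - f0, fun w => ?_⟩
    rw [lap_sub]
    have := hf1 w
    have := hf0 w
    omega
  exact no_chip_at (rookGraph F) q D1 r hD1q step2 E hEquiv hEeff hEq
end

section
/- The gonality of the Ferrers rook graph of the Ferrers diagram with row lengths (4,3,1) equals 4. -/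
open Finset

open scoped Classical

def F3 : Finset (ℕ × ℕ) := {(1, 1), (2, 1), (3, 1), (4, 1), (1, 2), (2, 2), (3, 2), (1, 3)}


/-! ### Auxiliary machinery -/

abbrev Vt := {p // p ∈ F3}

/-- the nontrivial invariant functional for the critical group ℤ/931 of the rook graph of F3 -/
def cc : Vt → ℤ := fun p =>
  match p.val with
  | (1,1) => 703 | (2,1) => 471 | (3,1) => 422 | (4,1) => 532
  | (1,2) => 228 | (2,2) => 227 | (3,2) => 913 | _ => 0

def mkV (p : ℕ × ℕ) (h : p ∈ F3 := by decide) : Vt := ⟨p, h⟩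

/-- witness vertex per equivalence class of effective divisors of degree ≤ 3 -/
def wit (d r : ℤ) : Vt :=
  if (d, r) ∈ ([(2, 532), (3, 23), (3, 133), (3, 304), (3, 514), (3, 532), (3, 759), (3, 760)] : List (ℤ×ℤ)) then mkV (2,1)
  else if (d, r) = (3, 72) then mkV (1,1)
  else if (d, r) ∈ ([(1, 532), (2, 23), (2, 72), (2, 133), (2, 304), (2, 514), (2, 759), (2, 760), (3, 5), (3, 54), (3, 55), (3, 56), (3, 57), (3, 76), (3, 115), (3, 250), (3, 251), (3, 286), (3, 299), (3, 300), (3, 360), (3, 361), (3, 445), (3, 494), (3, 496), (3, 531), (3, 543), (3, 555), (3, 604), (3, 665), (3, 726), (3, 741), (3, 742), (3, 775), (3, 836)] : List (ℤ×ℤ)) then mkV (1,3)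
  else mkV (4,1)

def chip (o : Option Vt) (v : Vt) : ℤ := if o = some v then 1 else 0

def div3 (a b c : Option Vt) (v : Vt) : ℤ := chip a v + chip b v + chip c v

set_option maxHeartbeats 4000000 in
lemma key : ∀ a b c : Option Vt,
    div3 a b c (wit (∑ v, div3 a b c v) ((∑ v, cc v * div3 a b c v) % 931)) = 0 := by decide

/-- computable adjacency indicator -/
def aij (u w : Vt) : ℤ :=
  if u ≠ w ∧ ((u : ℕ × ℕ).1 = (w : ℕ × ℕ).1 ∨ (u : ℕ × ℕ).2 = (w : ℕ × ℕ).2) then 1 else 0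

lemma ite_inst {α : Sort*} (p : Prop) (d1 d2 : Decidable p) (a b : α) :
    @ite α p d1 a b = @ite α p d2 a b := by rw [Subsingleton.elim d1 d2]

lemma lap_eq_s17 (f : Vt → ℤ) (w : Vt) :
    lap (rookGraph F3) f w = (∑ u, f u * aij u w) - f w * (∑ u, aij u w) := by
  unfold lap aij
  congr 1
  · exact Finset.sum_congr rfl fun u _ => by
      congr 1
      exact ite_inst ((rookGraph F3).Adj u w) _ _ (1 : ℤ) 0
  · congr 1
    exact Finset.sum_congr rfl fun u _ =>
      ite_inst ((rookGraph F3).Adj u w) _ _ (1 : ℤ) 0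

lemma aij_symm (u w : Vt) : aij u w = aij w u := by
  unfold aij
  by_cases h : u = w
  · simp [h]
  · simp only [ne_eq, h, Ne.symm h, not_false_iff, true_and]
    by_cases h1 : (u : ℕ × ℕ).1 = (w : ℕ × ℕ).1 <;>
    by_cases h2 : (u : ℕ × ℕ).2 = (w : ℕ × ℕ).2 <;>
    simp [h1, h2, eq_comm]

lemma sum_mul_lap (c f : Vt → ℤ) :
    ∑ w, c w * lap (rookGraph F3) f w
      = ∑ u, f u * ((∑ w, c w * aij u w) - c u * ∑ w, aij u w) := by
  simp only [lap_eq_s17, mul_sub, Finset.sum_sub_distrib, Finset.mul_sum]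
  congr 1
  · rw [Finset.sum_comm]
    refine Finset.sum_congr rfl fun u _ => Finset.sum_congr rfl fun w _ => by ring
  · refine Finset.sum_congr rfl fun u _ => ?_
    refine Finset.sum_congr rfl fun w _ => ?_
    rw [aij_symm]; ring

lemma dvd_sum_lap (f : Vt → ℤ) : (931:ℤ) ∣ ∑ w, cc w * lap (rookGraph F3) f w := by
  rw [sum_mul_lap]
  refine Finset.dvd_sum fun u _ => Dvd.dvd.mul_left ?_ _
  revert u; decide

lemma sum_lap (f : Vt → ℤ) : ∑ w, lap (rookGraph F3) f w = 0 := by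
  have h := sum_mul_lap (fun _ => 1) f
  simpa using h

lemma equiv_deg {D D' : Vt → ℤ} (h : LinEquiv (rookGraph F3) D D') : degD D' = degD D := by
  obtain ⟨f, hf⟩ := h
  unfold degD
  calc ∑ w, D' w = ∑ w, (D w + lap (rookGraph F3) f w) :=
        Finset.sum_congr rfl fun w _ => hf w
    _ = (∑ w, D w) + ∑ w, lap (rookGraph F3) f w := Finset.sum_add_distrib
    _ = ∑ w, D w := by rw [sum_lap, add_zero]

lemma equiv_res {D D' : Vt → ℤ} (h : LinEquiv (rookGraph F3) D D') :
    (∑ w, cc w * D' w) % 931 = (∑ w, cc w * D w) % 931 := by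
  obtain ⟨f, hf⟩ := h
  have heq : ∑ w, cc w * D' w
      = (∑ w, cc w * D w) + ∑ w, cc w * lap (rookGraph F3) f w := by
    rw [← Finset.sum_add_distrib]
    exact Finset.sum_congr rfl fun w _ => by rw [hf w]; ring
  obtain ⟨k, hk⟩ := dvd_sum_lap f
  rw [heq, hk]
  omega

lemma sum_chip_some (v : Vt) : ∑ w, chip (some v) w = 1 := by
  unfold chip
  simp

lemma split : ∀ n : ℕ, n ≤ 3 → ∀ E : Vt → ℤ, Effective E → degD E = n →
    ∃ a b c : Option Vt, ∀ v, E v = div3 a b c v := by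
  intro n
  induction n with
  | zero =>
    intro _ E hE h0
    refine ⟨none, none, none, fun v => ?_⟩
    have hz : E v = 0 :=
      (Finset.sum_eq_zero_iff_of_nonneg (fun v _ => hE v)).mp (by exact_mod_cast h0) v
        (Finset.mem_univ v)
    simp [div3, chip, hz]
  | succ n ih =>
    intro hn E hE hdeg
    have hex : ∃ v, 0 < E v := by
      by_contra hno
      push_neg at hno
      have : ∀ v ∈ Finset.univ, E v = 0 := fun v _ => le_antisymm (hno v) (hE v)
      have : degD E = 0 := Finset.sum_eq_zero this
      omega
    obtain ⟨v, hv⟩ := hex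
    set E' : Vt → ℤ := fun w => E w - chip (some v) w with hE'
    have hE'eff : Effective E' := by
      intro w
      by_cases hw : w = v
      · subst hw; simp [hE', chip]; omega
      · have hvw : ¬ v = w := fun h => hw h.symm
        have hch : chip (some v) w = 0 := by simp [chip, hvw]
        simp [hE', hch]; exact hE w
    have hE'deg : degD E' = n := by
      have : degD E' = degD E - ∑ w, chip (some v) w := by
        unfold degD
        rw [← Finset.sum_sub_distrib]
      rw [this, sum_chip_some, hdeg]
      push_cast
      ring
    obtain ⟨a, b, c, habc⟩ := ih (by omega) E' hE'eff hE'deg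
    have hdd : ∑ w, div3 a b c w = (n : ℤ) := by
      rw [← hE'deg]
      exact (Finset.sum_congr rfl fun w _ => (habc w).symm)
    -- one of a b c is none
    have hnone : a = none ∨ b = none ∨ c = none := by
      by_contra hall
      push_neg at hall
      obtain ⟨ha, hb, hc⟩ := hall
      obtain ⟨x, hx⟩ := Option.ne_none_iff_exists'.mp ha
      obtain ⟨y, hy⟩ := Option.ne_none_iff_exists'.mp hb
      obtain ⟨z, hz⟩ := Option.ne_none_iff_exists'.mp hc
      have : ∑ w, div3 a b c w = 3 := by
        subst hx hy hz
        unfold div3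
        rw [Finset.sum_add_distrib, Finset.sum_add_distrib, sum_chip_some, sum_chip_some,
          sum_chip_some]
        norm_num
      omega
    have hEval : ∀ w, E w = chip (some v) w + div3 a b c w := by
      intro w
      have := habc w
      simp only [hE'] at this
      omega
    have chip_none : ∀ w : Vt, chip none w = 0 := fun w => by simp [chip]
    rcases hnone with h | h | h
    · refine ⟨some v, b, c, fun w => ?_⟩
      subst h
      rw [hEval w]
      unfold div3
      rw [chip_none]
      ring
    · refine ⟨a, some v, c, fun w => ?_⟩
      subst h
      rw [hEval w]
      unfold div3
      rw [chip_none]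
      ring
    · refine ⟨a, b, some v, fun w => ?_⟩
      subst h
      rw [hEval w]
      unfold div3
      rw [chip_none]
      ring

lemma lower {d : ℤ} (hd : d ∈ gonSet F3) : 4 ≤ d := by
  obtain ⟨D, hD, rfl⟩ := hd
  by_contra hlt
  push_neg at hlt
  set v0 : Vt := wit (degD D) ((∑ w, cc w * D w) % 931) with hv0
  obtain ⟨E, hDE, hEeff, hEv⟩ := hD v0
  have hdeg : degD E = degD D := equiv_deg hDE
  have hnn : (0:ℤ) ≤ degD E := Finset.sum_nonneg fun v _ => hEeff v
  have h3 : degD E ≤ 3 := by omega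
  obtain ⟨a, b, c, hsplit⟩ := split (degD E).toNat (by omega) E hEeff
    (Int.toNat_of_nonneg hnn).symm
  have h1 : ∑ v, div3 a b c v = degD E :=
    (Finset.sum_congr rfl fun v _ => (hsplit v).symm)
  have h2 : ∑ v, cc v * div3 a b c v = ∑ v, cc v * E v :=
    Finset.sum_congr rfl fun v _ => by rw [hsplit v]
  have hres : (∑ w, cc w * E w) % 931 = (∑ w, cc w * D w) % 931 := equiv_res hDE
  have hkey := key a b c
  rw [h1, h2, hres, hdeg, ← hv0] at hkey
  have hEv0 : E v0 = 0 := by rw [hsplit v0, hkey]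
  omega

/-! ### Upper bound -/

def fA : Vt → ℤ := fun _ => 0
def fB : Vt → ℤ := fun v => if v.val = (4,1) then -1 else 0
def fC : Vt → ℤ := fun v => if v.val.2 = 2 then -1 else 0

def DA : Vt → ℤ := Dxy F3 4 2
def DB : Vt → ℤ := fun v => if v.val = (4,1) then 3 else if v.val = (1,3) then 1 else 0
def DC : Vt → ℤ := fun v => if v.val = (1,2) then 2 else if v.val.2 = 2 then 1 else 0

lemma linA : LinEquiv (rookGraph F3) (Dxy F3 4 2) DA := by
  refine ⟨fA, fun w => ?_⟩
  rw [lap_eq_s17]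
  revert w; decide

lemma linB : LinEquiv (rookGraph F3) (Dxy F3 4 2) DB := by
  refine ⟨fB, fun w => ?_⟩
  rw [lap_eq_s17]
  revert w; decide

lemma linC : LinEquiv (rookGraph F3) (Dxy F3 4 2) DC := by
  refine ⟨fC, fun w => ?_⟩
  rw [lap_eq_s17]
  revert w; decide

lemma upper : (4:ℤ) ∈ gonSet F3 := by
  refine ⟨Dxy F3 4 2, fun v => ?_, by decide⟩
  by_cases hA : 0 < DA v
  · exact ⟨DA, linA, by unfold Effective; decide, hA⟩
  by_cases hB : 0 < DB v
  · exact ⟨DB, linB, by unfold Effective; decide, hB⟩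
  refine ⟨DC, linC, by unfold Effective; decide, ?_⟩
  revert hA hB
  revert v; decide

theorem stmt17 : IsLeast (gonSet F3) 4 := ⟨upper, fun d hd => lower hd⟩
end
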